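/- Let d ≥ 2. Suppose for each n, {ℓ_1^{(n)}, …, ℓ_d^{(n)}} is a full sibling collection for σ_d (d pairwise disjoint chords with a common non-degenerate image), and suppose ℓ_i^{(n)} → ℓ_i as n → ∞ (convergence of endpoints) for each i, with the common image of the limit chords being non-degenerate. Then ℓ_1, …, ℓ_d are pairwise disjoint chords with a common image; i.e., the limit is again a full sibling collection. -/

import Mathlib

noncomputable section

/-- The circle `ℝ/ℤ`. -/
abbrev S1 := AddCircle (1 : ℝ)

/-- The `d`-tupling map `σ_d(t) = d·t` on the circle. -/
def sig (d : ℕ) (x : S1) : S1 := d • x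

/-- `StrictArc a b c` : `b` lies strictly inside the positively oriented open arc from `a` to `c`. -/
def StrictArc (a b c : S1) : Prop :=
  ∃ x y z : ℝ, (x : S1) = a ∧ (y : S1) = b ∧ (z : S1) = c ∧ x < y ∧ y < z ∧ z < x + 1

/-- Two chords (given by ordered pairs of endpoints) are linked (cross): their endpoints
alternate on the circle. -/
def Linked (p q : S1 × S1) : Prop :=
  (StrictArc p.1 q.1 p.2 ∧ StrictArc p.2 q.2 p.1) ∨ (StrictArc p.1 q.2 p.2 ∧ StrictArc p.2 q.1 p.1)

/-- Two chords are disjoint: they share no endpoint and are not linked. -/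
def ChordDisj (p q : S1 × S1) : Prop :=
  p.1 ≠ q.1 ∧ p.1 ≠ q.2 ∧ p.2 ≠ q.1 ∧ p.2 ≠ q.2 ∧ ¬ Linked p q

/-- The σ_d-image of a chord, as the (unordered) set of images of the endpoints. -/
def chordIm (d : ℕ) (p : S1 × S1) : Set S1 := {sig d p.1, sig d p.2}
/-- A full sibling collection: `d` pairwise disjoint chords with a common σ_d-image. -/
def SiblingCollection (d : ℕ) (f : Fin d → S1 × S1) : Prop :=
  (∀ i j, i ≠ j → ChordDisj (f i) (f j)) ∧ ∀ i j, chordIm d (f i) = chordIm d (f j)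

/-- A family of chords has the sibling property: every non-critical chord of the family
is a member of a full sibling collection contained in the family. -/
def HasSiblings (d : ℕ) (W : Set (S1 × S1)) : Prop :=
  ∀ p ∈ W, sig d p.1 ≠ sig d p.2 →
    ∃ f : Fin d → S1 × S1, (∀ i, f i ∈ W) ∧ (∃ i, f i = p) ∧ SiblingCollection d f

/-- A σ_d-invariant web: a family of chords with the sibling property, containing all
degenerate chords, closed under σ_d-images, and with every chord having a preimage chord. -/
def IsInvWeb (d : ℕ) (W : Set (S1 × S1)) : Prop :=
  HasSiblings d W ∧
  (∀ x : S1, (x, x) ∈ W) ∧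
  (∀ p ∈ W, (sig d p.1, sig d p.2) ∈ W) ∧
  (∀ p ∈ W, ∃ q ∈ W, ({sig d q.1, sig d q.2} : Set S1) = {p.1, p.2})

open Filter Topology

lemma sig_continuous (d : ℕ) : Continuous (sig d) := by
  show Continuous fun x : S1 => d • x
  exact continuous_id.nsmul d

/-- Every point of the circle near `a` has a lift near a given lift of `a`. -/
lemma lift_near (a' : S1) (x : ℝ) :
    ∃ x' : ℝ, (x' : S1) = a' ∧ |x' - x| = dist a' (x : S1) := by
  set δ : S1 := a' - (x : S1) with hδ
  set r : ℝ := ((AddCircle.equivIco 1 (-(1/2)) δ : ℝ)) with hrdef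
  have hr1 : r ∈ Set.Ico (-(1/2) : ℝ) (-(1/2) + 1) := (AddCircle.equivIco 1 (-(1/2)) δ).2
  have hrδ : (r : S1) = δ := (AddCircle.equivIco 1 (-(1/2))).symm_apply_apply δ
  refine ⟨x + r, ?_, ?_⟩
  · rw [AddCircle.coe_add, hrδ, hδ]
    abel
  · have h1 : x + r - x = r := by ring
    rw [h1]
    have hround : round ((1:ℝ)⁻¹ * r) = 0 := by
      rw [inv_one, one_mul, round_eq_zero_iff]
      constructor
      · exact hr1.1
      · have := hr1.2; linarith
    have hnorm : ‖δ‖ = |r| := by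
      rw [← hrδ, AddCircle.norm_eq, hround]
      simp
    rw [dist_eq_norm, ← hδ, hnorm]

/-- `StrictArc` is stable under small perturbations, filter version. -/
lemma strictArc_eventually {α : Type*} {l : Filter α} {a b c : S1}
    (h : StrictArc a b c) {fa fb fc : α → S1}
    (ha : Tendsto fa l (𝓝 a)) (hb : Tendsto fb l (𝓝 b)) (hc : Tendsto fc l (𝓝 c)) :
    ∀ᶠ n in l, StrictArc (fa n) (fb n) (fc n) := by
  obtain ⟨x, y, z, hxa, hyb, hzc, hxy, hyz, hzx⟩ := h
  set ε : ℝ := min (y - x) (min (z - y) (x + 1 - z)) with hε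
  have hεpos : 0 < ε := by
    refine lt_min (by linarith) (lt_min (by linarith) (by linarith))
  have hε1 : ε ≤ y - x := min_le_left _ _
  have hε2 : ε ≤ z - y := le_trans (min_le_right _ _) (min_le_left _ _)
  have hε3 : ε ≤ x + 1 - z := le_trans (min_le_right _ _) (min_le_right _ _)
  have h3 : (0:ℝ) < ε / 3 := by linarith
  have Ha : ∀ᶠ n in l, fa n ∈ Metric.ball a (ε/3) := ha (Metric.ball_mem_nhds a h3)
  have Hb : ∀ᶠ n in l, fb n ∈ Metric.ball b (ε/3) := hb (Metric.ball_mem_nhds b h3)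
  have Hc : ∀ᶠ n in l, fc n ∈ Metric.ball c (ε/3) := hc (Metric.ball_mem_nhds c h3)
  filter_upwards [Ha, Hb, Hc] with n hna hnb hnc
  obtain ⟨x', hx'1, hx'2⟩ := lift_near (fa n) x
  obtain ⟨y', hy'1, hy'2⟩ := lift_near (fb n) y
  obtain ⟨z', hz'1, hz'2⟩ := lift_near (fc n) z
  rw [hxa] at hx'2; rw [hyb] at hy'2; rw [hzc] at hz'2
  have hxb : |x' - x| < ε/3 := by rw [hx'2]; exact Metric.mem_ball.mp hna
  have hyb' : |y' - y| < ε/3 := by rw [hy'2]; exact Metric.mem_ball.mp hnb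
  have hzb : |z' - z| < ε/3 := by rw [hz'2]; exact Metric.mem_ball.mp hnc
  obtain ⟨hxl, hxr⟩ := abs_lt.mp hxb
  obtain ⟨hyl, hyr⟩ := abs_lt.mp hyb'
  obtain ⟨hzl, hzr⟩ := abs_lt.mp hzb
  exact ⟨x', y', z', hx'1, hy'1, hz'1, by linarith, by linarith, by linarith⟩

/-- `Linked` is stable under small perturbations, filter version. -/
lemma linked_eventually {α : Type*} {l : Filter α} {p q : S1 × S1} (h : Linked p q)
    {fp fq : α → S1 × S1} (hp : Tendsto fp l (𝓝 p)) (hq : Tendsto fq l (𝓝 q)) :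
    ∀ᶠ n in l, Linked (fp n) (fq n) := by
  have hp1 : Tendsto (fun n => (fp n).1) l (𝓝 p.1) := (continuous_fst.tendsto p).comp hp
  have hp2 : Tendsto (fun n => (fp n).2) l (𝓝 p.2) := (continuous_snd.tendsto p).comp hp
  have hq1 : Tendsto (fun n => (fq n).1) l (𝓝 q.1) := (continuous_fst.tendsto q).comp hq
  have hq2 : Tendsto (fun n => (fq n).2) l (𝓝 q.2) := (continuous_snd.tendsto q).comp hq
  rcases h with ⟨h1, h2⟩ | ⟨h1, h2⟩
  · filter_upwards [strictArc_eventually h1 hp1 hq1 hp2,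
      strictArc_eventually h2 hp2 hq2 hp1] with n A B
    exact Or.inl ⟨A, B⟩
  · filter_upwards [strictArc_eventually h1 hp1 hq2 hp2,
      strictArc_eventually h2 hp2 hq1 hp1] with n A B
    exact Or.inr ⟨A, B⟩

/-- The set of `d`-torsion points of the circle is finite. -/
lemma torsion_finite {d : ℕ} (hd : 0 < d) : {t : S1 | d • t = 0}.Finite := by
  apply Set.Finite.subset
    (Set.finite_range (fun k : Fin d => ((((k : ℕ) : ℝ) / d : ℝ) : S1)))
  intro t ht
  induction t using QuotientAddGroup.induction_on with
  | H x =>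
  have hx0 : d • ((x : ℝ) : S1) = 0 := ht
  rw [← AddCircle.coe_nsmul, AddCircle.coe_eq_zero_iff] at hx0
  obtain ⟨m, hm⟩ := hx0
  have hdR : (d : ℝ) ≠ 0 := Nat.cast_ne_zero.mpr hd.ne'
  have hm' : (m : ℝ) = d * x := by
    simpa [zsmul_eq_mul, nsmul_eq_mul] using hm
  have hxval : x = (m : ℝ) / d := by field_simp [hm']; linarith
  have h1 : (0:ℤ) ≤ m % d := Int.emod_nonneg m (by exact_mod_cast hd.ne')
  have h2 : m % d < d := Int.emod_lt_of_pos m (by exact_mod_cast hd)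
  refine ⟨⟨(m % d).toNat, by omega⟩, ?_⟩
  have hk : (((m % d).toNat : ℕ) : ℝ) = ((m % d : ℤ) : ℝ) := by
    exact_mod_cast Int.toNat_of_nonneg h1
  show (((((m % (d:ℤ)).toNat : ℕ) : ℝ) / (d:ℝ) : ℝ) : S1) = (x : S1)
  rw [← sub_eq_zero, ← AddCircle.coe_sub, AddCircle.coe_eq_zero_iff]
  refine ⟨-(m / d), ?_⟩
  have hdm : (d:ℤ) * (m / d) + m % d = m := Int.mul_ediv_add_emod m d
  have hdmR : (d : ℝ) * ((m / d : ℤ) : ℝ) + ((m % d : ℤ) : ℝ) = (m : ℝ) := by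
    exact_mod_cast hdm
  rw [hxval, hk]
  have : ((m % d : ℤ) : ℝ) / d - (m : ℝ) / d = -(((m / d : ℤ) : ℝ)) := by
    field_simp
    linarith
  rw [this]
  simp [zsmul_eq_mul]

/-- Key separation lemma: if `u n`, `v n` are always distinct, and `σ_d(u n)` always
equals `σ_d` of one of the two endpoints `v n`, `w n`, and the limit images of `v`, `w`
are distinct, then the limits of `u` and `v` are distinct. -/
lemma limits_ne (d : ℕ) (hd : 0 < d) {u v w : ℕ → S1} {U V W' : S1}
    (hu : Tendsto u atTop (𝓝 U)) (hv : Tendsto v atTop (𝓝 V))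
    (hw : Tendsto w atTop (𝓝 W'))
    (hne : ∀ n, u n ≠ v n)
    (him : ∀ n, sig d (u n) = sig d (v n) ∨ sig d (u n) = sig d (w n))
    (hvw : sig d V ≠ sig d W') : U ≠ V := by
  intro hUV
  by_cases hfreq : ∃ᶠ n in atTop, sig d (u n) = sig d (v n)
  · have hC : IsClosed ({t : S1 | d • t = 0} \ {0}) :=
      ((torsion_finite hd).subset Set.diff_subset).isClosed
    have htend : Tendsto (fun n => u n - v n) atTop (𝓝 (U - V)) := hu.sub hv
    have hmem : U - V ∈ {t : S1 | d • t = 0} \ {0} := by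
      refine hC.mem_of_frequently_of_tendsto ?_ htend
      refine hfreq.mono fun n hn => ⟨?_, sub_ne_zero.mpr (hne n)⟩
      have hn' : d • u n = d • v n := hn
      show d • (u n - v n) = 0
      rw [smul_sub, hn', sub_self]
    exact hmem.2 (by simp [hUV])
  · have hev : ∀ᶠ n in atTop, sig d (u n) = sig d (w n) := by
      filter_upwards [not_frequently.mp hfreq] with n hn
      exact (him n).resolve_left hn
    have h1 : Tendsto (fun n => sig d (u n)) atTop (𝓝 (sig d U)) :=
      ((sig_continuous d).tendsto U).comp hu
    have h2 : Tendsto (fun n => sig d (w n)) atTop (𝓝 (sig d W')) :=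
      ((sig_continuous d).tendsto W').comp hw
    have : sig d U = sig d W' := tendsto_nhds_unique_of_frequently_eq h1 h2 hev.frequently
    rw [hUV] at this
    exact hvw this

/-- A limit of full sibling collections whose limit image chord is
non-degenerate is again a full sibling collection: the limit chords are pairwise disjoint
and have a common image. -/
theorem limit_of_sibling_collections (d : ℕ) (hd : 2 ≤ d)
    (F : ℕ → Fin d → S1 × S1) (L : Fin d → S1 × S1)
    (hsib : ∀ n, SiblingCollection d (F n))
    (hnd : ∀ n i, sig d (F n i).1 ≠ sig d (F n i).2)
    (hconv : ∀ i, Tendsto (fun n => F n i) atTop (𝓝 (L i)))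
    (hlimnd : ∀ i, sig d (L i).1 ≠ sig d (L i).2) :
    SiblingCollection d L := by
  have hd0 : 0 < d := by omega
  have hc1 : ∀ k, Tendsto (fun n => (F n k).1) atTop (𝓝 (L k).1) := fun k =>
    (continuous_fst.tendsto _).comp (hconv k)
  have hc2 : ∀ k, Tendsto (fun n => (F n k).2) atTop (𝓝 (L k).2) := fun k =>
    (continuous_snd.tendsto _).comp (hconv k)
  -- membership of images
  have himm : ∀ (i j : Fin d) (n : ℕ) (e : S1), e ∈ chordIm d (F n i) →
      e = sig d (F n j).1 ∨ e = sig d (F n j).2 := by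
    intro i j n e he
    rw [(hsib n).2 i j] at he
    exact he
  have him1 : ∀ (i j : Fin d) (n : ℕ),
      sig d (F n i).1 = sig d (F n j).1 ∨ sig d (F n i).1 = sig d (F n j).2 := fun i j n =>
    himm i j n _ (Or.inl rfl)
  have him2 : ∀ (i j : Fin d) (n : ℕ),
      sig d (F n i).2 = sig d (F n j).1 ∨ sig d (F n i).2 = sig d (F n j).2 := fun i j n =>
    himm i j n _ (Or.inr rfl)
  constructor
  · -- pairwise disjointness
    intro i j hij
    have hdisj : ∀ n, ChordDisj (F n i) (F n j) := fun n => (hsib n).1 i j hij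
    refine ⟨?_, ?_, ?_, ?_, ?_⟩
    · exact limits_ne d hd0 (hc1 i) (hc1 j) (hc2 j) (fun n => (hdisj n).1)
        (him1 i j) (hlimnd j)
    · exact limits_ne d hd0 (hc1 i) (hc2 j) (hc1 j) (fun n => (hdisj n).2.1)
        (fun n => (him1 i j n).symm) (hlimnd j).symm
    · exact limits_ne d hd0 (hc2 i) (hc1 j) (hc2 j) (fun n => (hdisj n).2.2.1)
        (him2 i j) (hlimnd j)
    · exact limits_ne d hd0 (hc2 i) (hc2 j) (hc1 j) (fun n => (hdisj n).2.2.2.1)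
        (fun n => (him2 i j n).symm) (hlimnd j).symm
    · intro hl
      obtain ⟨n, hn⟩ := (linked_eventually hl (hconv i) (hconv j)).exists
      exact (hdisj n).2.2.2.2 hn
  · -- common image
    intro i j
    have hPQ : ∀ n,
        (sig d (F n i).1 = sig d (F n j).1 ∧ sig d (F n i).2 = sig d (F n j).2) ∨
        (sig d (F n i).1 = sig d (F n j).2 ∧ sig d (F n i).2 = sig d (F n j).1) := by
      intro n
      rcases him1 i j n with h1 | h1 <;> rcases him2 i j n with h2 | h2
      · exact absurd (h1.trans h2.symm) (hnd n i)
      · exact Or.inl ⟨h1, h2⟩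
      · exact Or.inr ⟨h1, h2⟩
      · exact absurd (h1.trans h2.symm) (hnd n i)
    have hfreq := Filter.Frequently.of_forall (f := (atTop : Filter ℕ)) hPQ
    have ti1 : Tendsto (fun n => sig d (F n i).1) atTop (𝓝 (sig d (L i).1)) :=
      ((sig_continuous d).tendsto _).comp (hc1 i)
    have ti2 : Tendsto (fun n => sig d (F n i).2) atTop (𝓝 (sig d (L i).2)) :=
      ((sig_continuous d).tendsto _).comp (hc2 i)
    have tj1 : Tendsto (fun n => sig d (F n j).1) atTop (𝓝 (sig d (L j).1)) :=
      ((sig_continuous d).tendsto _).comp (hc1 j)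
    have tj2 : Tendsto (fun n => sig d (F n j).2) atTop (𝓝 (sig d (L j).2)) :=
      ((sig_continuous d).tendsto _).comp (hc2 j)
    rcases frequently_or_distrib.mp hfreq with hP | hQ
    · have e1 : sig d (L i).1 = sig d (L j).1 :=
        tendsto_nhds_unique_of_frequently_eq ti1 tj1 (hP.mono fun n h => h.1)
      have e2 : sig d (L i).2 = sig d (L j).2 :=
        tendsto_nhds_unique_of_frequently_eq ti2 tj2 (hP.mono fun n h => h.2)
      unfold chordIm
      rw [e1, e2]
    · have e1 : sig d (L i).1 = sig d (L j).2 :=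
        tendsto_nhds_unique_of_frequently_eq ti1 tj2 (hQ.mono fun n h => h.1)
      have e2 : sig d (L i).2 = sig d (L j).1 :=
        tendsto_nhds_unique_of_frequently_eq ti2 tj1 (hQ.mono fun n h => h.2)
      unfold chordIm
      rw [e1, e2, Set.pair_comm]
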